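/- Let ε, ε^c ∈ (0, 1). Let μ be a Borel probability measure on ℝ^{n_w}, and let G : ℝ^{n_w} → ℝ^{n_c × n_ζ} and g : ℝ^{n_w} → ℝ^{n_c} be Borel measurable. Define ℤ^P := { ζ : μ{ w : G(w)·ζ ≤ g(w) } ≥ 1 − ε } and Z̃(w) := { ζ : G(w)·ζ ≤ g(w) }. Let ζ_c ∈ ℤ^P and let Z^{SAS} ⊆ ℝ^{n_ζ} be a nonempty compact set; for σ ≥ 0 define the scalable simple approximating set Z^S(σ) := { ζ_c + σ·z : z ∈ Z^{SAS} }, and for each w define the scaling factor σ(w) := sup{ σ ≥ 0 : Z^S(σ) ⊆ Z̃(w) } if ζ_c ∈ Z̃(w) and σ(w) := 0 otherwise. Let N ∈ ℕ satisfy N ≥ (7.47/ε)·ln(1/ε^c) and set N_r := ⌈ε·N/2⌉. Then, with respect to the N-fold product measure μ^{⊗N}, the probability of the event { (w_1, …, w_N) : Z^S(σ*) ⊆ ℤ^P, where σ* is the N_r-th smallest value among σ(w_1), …, σ(w_N) } is at least 1 − ε^c. -/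

import Mathlib

section PSAux
open MeasureTheory Matrix Finset ENNReal


open Finset in
lemma ps_chernoff_real (N m : ℕ) (p ε εc : ℝ) (hεp : ε ≤ p) (hp1 : p ≤ 1)
    (hε0 : 0 < ε) (hε1 : ε < 1) (hεc0 : 0 < εc) (hεc1 : εc < 1)
    (hm : (m : ℝ) ≤ ε * N / 2) (hN : 7.47 / ε * Real.log (1 / εc) ≤ (N : ℝ)) :
    ∑ S ∈ (Finset.univ : Finset (Fin N)).powerset.filter (fun S => S.card ≤ m),
      p ^ S.card * (1 - p) ^ (N - S.card) ≤ εc := by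
  have hp0 : 0 ≤ p := le_of_lt (lt_of_lt_of_le hε0 hεp)
  have h1p : 0 ≤ 1 - p := by linarith
  have step1 : ∑ S ∈ (Finset.univ : Finset (Fin N)).powerset.filter (fun S => S.card ≤ m),
      p ^ S.card * (1 - p) ^ (N - S.card)
      ≤ 2 ^ m * ∑ S ∈ (Finset.univ : Finset (Fin N)).powerset,
        (p / 2) ^ S.card * (1 - p) ^ (N - S.card) := by
    rw [Finset.mul_sum]
    refine le_trans (Finset.sum_le_sum ?_) (Finset.sum_le_sum_of_subset_of_nonneg
      (Finset.filter_subset _ _) (fun S _ _ => by positivity))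
    intro S hS
    have hc : S.card ≤ m := (Finset.mem_filter.mp hS).2
    have h2 : (2:ℝ) ^ S.card ≤ 2 ^ m := pow_le_pow_right₀ one_le_two hc
    have : p ^ S.card = 2 ^ S.card * (p / 2) ^ S.card := by
      rw [← mul_pow]; ring_nf
    rw [this]
    have hnn : (0:ℝ) ≤ (p / 2) ^ S.card * (1 - p) ^ (N - S.card) := by positivity
    calc 2 ^ S.card * (p / 2) ^ S.card * (1 - p) ^ (N - S.card)
        = 2 ^ S.card * ((p / 2) ^ S.card * (1 - p) ^ (N - S.card)) := by ring
      _ ≤ 2 ^ m * ((p / 2) ^ S.card * (1 - p) ^ (N - S.card)) :=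
          mul_le_mul_of_nonneg_right h2 hnn
  have step2 : ∑ S ∈ (Finset.univ : Finset (Fin N)).powerset,
      (p / 2) ^ S.card * (1 - p) ^ (N - S.card) = (1 - p / 2) ^ N := by
    have := Finset.prod_add (fun _ : Fin N => p / 2) (fun _ : Fin N => 1 - p)
      Finset.univ
    simp only [Finset.prod_const, Finset.card_sdiff_of_subset (Finset.subset_univ _),
      Finset.card_univ, Fintype.card_fin] at this
    rw [← this]
    norm_num
    ring_nf
  rw [step2] at step1
  refine le_trans step1 ?_
  -- now 2^m * (1 - p/2)^N ≤ 2^m * (1 - ε/2)^N ≤ εc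
  have hε2 : 0 ≤ 1 - ε / 2 := by linarith
  have hb : (1 - p / 2 : ℝ) ^ N ≤ (1 - ε / 2) ^ N := by
    apply pow_le_pow_left₀ (by linarith) (by linarith)
  have h2m : (2:ℝ) ^ m = Real.exp (m * Real.log 2) := by
    rw [← Real.log_pow, Real.exp_log (by positivity)]
  have hexp : (1 - ε / 2 : ℝ) ^ N ≤ Real.exp (-(ε / 2) * N) := by
    calc (1 - ε / 2 : ℝ) ^ N ≤ Real.exp (-(ε / 2)) ^ N :=
          pow_le_pow_left₀ hε2 (by linarith [Real.add_one_le_exp (-(ε/2))]) N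
      _ = Real.exp (-(ε / 2) * N) := by rw [← Real.exp_nat_mul]; ring_nf
  have hlog : 0 < Real.log (1 / εc) := Real.log_pos (by rw [lt_div_iff₀ hεc0]; linarith)
  have hεN : 7.47 * Real.log (1 / εc) ≤ ε * N := by
    have := mul_le_mul_of_nonneg_left hN (le_of_lt hε0)
    calc 7.47 * Real.log (1 / εc) = ε * (7.47 / ε * Real.log (1 / εc)) := by
          field_simp
      _ ≤ ε * N := this
  calc (2:ℝ) ^ m * (1 - p / 2) ^ N ≤ 2 ^ m * (1 - ε / 2) ^ N := by
        apply mul_le_mul_of_nonneg_left hb (by positivity)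
    _ ≤ Real.exp (m * Real.log 2) * Real.exp (-(ε / 2) * N) := by
        rw [h2m]; exact mul_le_mul_of_nonneg_left hexp (by positivity)
    _ = Real.exp (m * Real.log 2 - ε / 2 * N) := by rw [← Real.exp_add]; ring_nf
    _ ≤ Real.exp (-Real.log (1 / εc)) := by
        apply Real.exp_le_exp.mpr
        have hlog2 : Real.log 2 < 0.6931471808 := Real.log_two_lt_d9
        have hlog2' : 0 < Real.log 2 := Real.log_pos one_lt_two
        have h1 : (m:ℝ) * Real.log 2 ≤ ε * N / 2 * Real.log 2 :=
          mul_le_mul_of_nonneg_right hm (le_of_lt hlog2')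
        nlinarith [hεN, hlog, hlog2, h1]
    _ = εc := by rw [Real.log_div one_ne_zero (ne_of_gt hεc0)]; simp [Real.exp_log hεc0]


-- arithmetic interpolation helper
lemma ps_interp {a b c σ σ' : ℝ} (h0 : 0 ≤ σ') (hs : σ' ≤ σ) (ha : a ≤ c)
    (h : a + σ * b ≤ c) : a + σ' * b ≤ c := by
  rcases le_or_gt b 0 with hb | hb
  · nlinarith
  · nlinarith

lemma ps_meas_count {α : Type*} [MeasurableSpace α] (N Nr : ℕ) (A : Set α)
    [DecidablePred (· ∈ A)] (hA : MeasurableSet A) :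
    MeasurableSet {ws : Fin N → α | Nr ≤ (Finset.univ.filter fun i => ws i ∈ A).card} := by
  have hmeas : Measurable fun ws : Fin N → α =>
      (Finset.univ.filter fun i => ws i ∈ A).card := by
    simp only [Finset.card_filter]
    refine Finset.measurable_sum _ fun i _ => ?_
    refine Measurable.ite ?_ measurable_const measurable_const
    exact (measurable_pi_apply i) hA
  exact hmeas (by trivial : MeasurableSet (Set.Ici Nr))


lemma ps_meas (nw nc nζ : ℕ) (G : (Fin nw → ℝ) → Matrix (Fin nc) (Fin nζ) ℝ)
    (hG : ∀ i j, Measurable fun w => G w i j)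
    (g : (Fin nw → ℝ) → (Fin nc → ℝ)) (hg : Measurable g) (Z : Set (Fin nζ → ℝ)) :
    MeasurableSet {w | ∀ z ∈ Z, ∀ i, (G w).mulVec z i ≤ g w i} := by
  have hpt : ∀ z : Fin nζ → ℝ, MeasurableSet {w | ∀ i, (G w).mulVec z i ≤ g w i} := by
    intro z
    have : {w | ∀ i, (G w).mulVec z i ≤ g w i}
        = ⋂ i, {w | (G w).mulVec z i ≤ g w i} := by ext w; simp
    rw [this]
    refine MeasurableSet.iInter fun i => ?_
    have hf : Measurable fun w => (G w).mulVec z i := by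
      simp only [Matrix.mulVec, dotProduct]
      exact Finset.measurable_sum _ fun j _ => (hG i j).mul_const _
    exact measurableSet_le hf ((measurable_pi_apply i).comp hg)
  obtain ⟨D, hDZ, hDc, hZD⟩ :=
    (TopologicalSpace.IsSeparable.of_separableSpace Z).exists_countable_dense_subset
  have key : {w | ∀ z ∈ Z, ∀ i, (G w).mulVec z i ≤ g w i}
      = ⋂ z ∈ D, {w | ∀ i, (G w).mulVec z i ≤ g w i} := by
    ext w
    simp only [Set.mem_setOf_eq, Set.mem_iInter]
    constructor
    · intro h z hz; exact h z (hDZ hz)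
    · intro h z hz
      have hC : IsClosed {z' : Fin nζ → ℝ | ∀ i, (G w).mulVec z' i ≤ g w i} := by
        have : {z' : Fin nζ → ℝ | ∀ i, (G w).mulVec z' i ≤ g w i}
            = ⋂ i, {z' | (G w).mulVec z' i ≤ g w i} := by ext z'; simp
        rw [this]
        refine isClosed_iInter fun i => ?_
        have hcont : Continuous fun z' : Fin nζ → ℝ => (G w).mulVec z' i := by
          simp only [Matrix.mulVec, dotProduct]
          exact continuous_finset_sum _ fun j _ => continuous_const.mul (continuous_apply j)
        exact isClosed_le hcont continuous_const
      have : z ∈ closure {z' : Fin nζ → ℝ | ∀ i, (G w).mulVec z' i ≤ g w i} :=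
        closure_mono (fun z' hz' => h z' hz') (hZD hz)
      exact hC.closure_subset this
  rw [key]
  exact MeasurableSet.biInter hDc fun z _ => hpt z


lemma ps_count_bound {α : Type*} [MeasurableSpace α] (μ : Measure α) [IsProbabilityMeasure μ]
    (N Nr : ℕ) (hNr : 1 ≤ Nr) (A : Set α) [DecidablePred (· ∈ A)] (hA : MeasurableSet A)
    (ε εc : ℝ) (hε0 : 0 < ε) (hε1 : ε < 1) (hεc0 : 0 < εc) (hεc1 : εc < 1)
    (hm : ((Nr - 1 : ℕ) : ℝ) ≤ ε * N / 2) (hN : 7.47 / ε * Real.log (1 / εc) ≤ (N : ℝ))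
    (hμA : ENNReal.ofReal ε ≤ μ A) :
    Measure.pi (fun _ : Fin N => μ)
      {ws : Fin N → α | (Finset.univ.filter fun i => ws i ∈ A).card < Nr}
      ≤ ENNReal.ofReal εc := by
  classical
  set m := Nr - 1 with hmdef
  set p := (μ A).toReal with hpdef
  have hAne : μ A ≠ ⊤ := measure_ne_top μ A
  have hεp : ε ≤ p := (ENNReal.ofReal_le_iff_le_toReal hAne).mp hμA
  have hp1 : p ≤ 1 := by
    simpa using ENNReal.toReal_mono (by simp) (prob_le_one (μ := μ) (s := A))
  have hp0 : 0 ≤ p := ENNReal.toReal_nonneg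
  have hμAeq : μ A = ENNReal.ofReal p := (ENNReal.ofReal_toReal hAne).symm
  have hμAc : μ Aᶜ = ENNReal.ofReal (1 - p) := by
    rw [prob_compl_eq_one_sub hA, hμAeq, ← ENNReal.ofReal_one, ← ENNReal.ofReal_sub _ hp0]
  set fs : Finset (Finset (Fin N)) :=
    (Finset.univ : Finset (Fin N)).powerset.filter (fun S => S.card ≤ m) with hfs
  have cover : {ws : Fin N → α | (Finset.univ.filter fun i => ws i ∈ A).card < Nr}
      ⊆ ⋃ S ∈ fs, Set.univ.pi (fun i => if i ∈ S then A else Aᶜ) := by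
    intro ws hws
    have hmem : (Finset.univ.filter fun i => ws i ∈ A) ∈ fs := by
      simp only [hfs, Finset.mem_filter, Finset.mem_powerset]
      exact ⟨Finset.subset_univ _, (Nat.lt_iff_le_pred hNr).mp hws⟩
    refine Set.mem_biUnion hmem ?_
    intro i _
    by_cases h : ws i ∈ A <;> simp [h]
  calc Measure.pi (fun _ : Fin N => μ)
        {ws : Fin N → α | (Finset.univ.filter fun i => ws i ∈ A).card < Nr}
      ≤ Measure.pi (fun _ : Fin N => μ)
          (⋃ S ∈ fs, Set.univ.pi (fun i => if i ∈ S then A else Aᶜ)) :=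
        measure_mono cover
    _ ≤ ∑ S ∈ fs, Measure.pi (fun _ : Fin N => μ)
          (Set.univ.pi (fun i => if i ∈ S then A else Aᶜ)) :=
        measure_biUnion_finset_le _ _
    _ = ∑ S ∈ fs, ENNReal.ofReal (p ^ S.card * (1 - p) ^ (N - S.card)) := by
        refine Finset.sum_congr rfl fun S _ => ?_
        rw [Measure.pi_pi]
        have : ∀ i : Fin N, μ (if i ∈ S then A else Aᶜ)
            = if i ∈ S then ENNReal.ofReal p else ENNReal.ofReal (1 - p) := by
          intro i; by_cases h : i ∈ S <;> simp [h, hμAeq, hμAc]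
        simp only [this]
        rw [Finset.prod_ite, Finset.prod_const, Finset.prod_const]
        have h1 : (Finset.univ.filter fun i => i ∈ S) = S := by
          ext i; simp
        have h2 : ((Finset.univ : Finset (Fin N)).filter fun i => i ∉ S).card
            = N - S.card := by
          rw [Finset.filter_not, Finset.card_sdiff_of_subset (by rw [h1]; exact Finset.subset_univ _)]
          rw [h1, Finset.card_univ, Fintype.card_fin]
        rw [h1, h2, ENNReal.ofReal_mul (by positivity), ENNReal.ofReal_pow hp0,
          ENNReal.ofReal_pow (by linarith)]
    _ = ENNReal.ofReal (∑ S ∈ fs, p ^ S.card * (1 - p) ^ (N - S.card)) := by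
        rw [ENNReal.ofReal_sum_of_nonneg]
        intro S _
        have h1p : (0:ℝ) ≤ 1 - p := by linarith
        exact mul_nonneg (pow_nonneg hp0 _) (pow_nonneg h1p _)
    _ ≤ ENNReal.ofReal εc := ENNReal.ofReal_le_ofReal (ps_chernoff_real N m p ε εc hεp hp1 hε0 hε1 hεc0 hεc1 hm hN)

end PSAux

open Matrix MeasureTheory Classical in

/-- Proposition 5 of the paper: probabilistic scaling, Mammarella
et al.. Scaling a simple approximating set `Z^S(σ) = ζ_c ⊕ σ·(Z^{SAS})` centered at
`ζ_c ∈ ℤ^P` by the `N_r`-th smallest of the sample scaling factors `σ(w_1), …, σ(w_N)`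
(`N_r = ⌈εN/2⌉`, `N ≥ (7.47/ε) ln(1/ε^c)`) yields, with probability at least
`1 - ε^c` over the samples, an inner approximation `Z^S(σ*) ⊆ ℤ^P`. -/
theorem probabilistic_scaling
    (nw nc nζ : ℕ)
    (ε εc : ℝ) (hε : ε ∈ Set.Ioo (0 : ℝ) 1) (hεc : εc ∈ Set.Ioo (0 : ℝ) 1)
    (μ : Measure (Fin nw → ℝ)) [IsProbabilityMeasure μ]
    (G : (Fin nw → ℝ) → Matrix (Fin nc) (Fin nζ) ℝ)
    (hG : ∀ i j, Measurable fun w => G w i j)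
    (g : (Fin nw → ℝ) → (Fin nc → ℝ)) (hg : Measurable g)
    (Ztilde : (Fin nw → ℝ) → Set (Fin nζ → ℝ))
    (hZtilde : ∀ w, Ztilde w = {ζ | ∀ i, (G w).mulVec ζ i ≤ g w i})
    (ZP : Set (Fin nζ → ℝ))
    (hZP : ZP = {ζ | ENNReal.ofReal (1 - ε) ≤ μ {w | ζ ∈ Ztilde w}})
    (ζc : Fin nζ → ℝ) (hζc : ζc ∈ ZP)
    (ZSAS : Set (Fin nζ → ℝ)) (hZSASne : ZSAS.Nonempty) (hZSAScomp : IsCompact ZSAS)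
    (ZS : ℝ → Set (Fin nζ → ℝ))
    (hZS : ∀ σ : ℝ, ZS σ = (fun z => ζc + σ • z) '' ZSAS)
    (sf : (Fin nw → ℝ) → ℝ)
    (hsf : ∀ w, sf w = if ζc ∈ Ztilde w then
        sSup {σ : ℝ | 0 ≤ σ ∧ ZS σ ⊆ Ztilde w} else 0)
    (N : ℕ) (hN : 7.47 / ε * Real.log (1 / εc) ≤ (N : ℝ))
    (Nr : ℕ) (hNr : Nr = ⌈ε * (N : ℝ) / 2⌉₊)
    (σstar : (Fin N → (Fin nw → ℝ)) → ℝ)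
    -- `σstar ws` is the `N_r`-th smallest value among `sf (ws 1), …, sf (ws N)`:
    (hσstar : ∀ ws, σstar ws =
      sInf {t : ℝ | Nr ≤ (Finset.univ.filter fun i : Fin N => sf (ws i) ≤ t).card}) :
    ENNReal.ofReal (1 - εc) ≤
      Measure.pi (fun _ : Fin N => μ)
        {ws : Fin N → (Fin nw → ℝ) | ZS (σstar ws) ⊆ ZP} := by
  
  classical
  obtain ⟨hε0, hε1⟩ := hε
  obtain ⟨hεc0, hεc1⟩ := hεc
  set μN := Measure.pi (fun _ : Fin N => μ) with hμN
  haveI : IsProbabilityMeasure μN := by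
    constructor
    rw [hμN, ← Set.pi_univ Set.univ, Measure.pi_pi]
    simp
  -- basic numeric facts
  have hlog : 0 < Real.log (1 / εc) := Real.log_pos (by rw [lt_div_iff₀ hεc0]; linarith)
  have hNpos : 0 < N := by
    rcases Nat.eq_zero_or_pos N with h | h
    · exfalso
      rw [h] at hN
      have : (0:ℝ) < 7.47 / ε * Real.log (1 / εc) :=
        mul_pos (div_pos (by norm_num) hε0) hlog
      push_cast at hN
      linarith
    · exact h
  have hNR0 : (0:ℝ) < ε * N / 2 := by
    have : (0:ℝ) < N := Nat.cast_pos.mpr hNpos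
    positivity
  have hNr1 : 1 ≤ Nr := by rw [hNr]; exact Nat.one_le_ceil_iff.mpr hNR0
  have hmR : ((Nr - 1 : ℕ) : ℝ) ≤ ε * N / 2 := by
    have hceil : (Nr : ℝ) < ε * N / 2 + 1 := by
      rw [hNr]; exact Nat.ceil_lt_add_one hNR0.le
    rw [Nat.cast_sub hNr1]
    simpa using by linarith
  -- the key parametrized measurable sets
  set Q : ℝ → Set (Fin nw → ℝ) :=
    fun σ => {w | ∀ z ∈ insert ζc (ZS σ), z ∈ Ztilde w} with hQdef
  have hQmeas : ∀ σ, MeasurableSet (Q σ) := by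
    intro σ
    have : Q σ = {w | ∀ z ∈ insert ζc (ZS σ), ∀ i, (G w).mulVec z i ≤ g w i} := by
      ext w
      simp only [hQdef, Set.mem_setOf_eq, hZtilde w]
    rw [this]
    exact ps_meas nw nc nζ G hG g hg _
  have hQmem : ∀ σ w, w ∈ Q σ ↔
      (ζc ∈ Ztilde w ∧ ∀ z ∈ ZSAS, ζc + σ • z ∈ Ztilde w) := by
    intro σ w
    simp only [hQdef, Set.mem_setOf_eq, Set.forall_mem_insert, hZS σ,
      Set.forall_mem_image]
  have hcond : ∀ σ (w : Fin nw → ℝ) z, (ζc + σ • z ∈ Ztilde w) ↔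
      ∀ i, (G w).mulVec ζc i + σ * (G w).mulVec z i ≤ g w i := by
    intro σ w z
    rw [hZtilde w]
    simp only [Set.mem_setOf_eq, Matrix.mulVec_add, Matrix.mulVec_smul, Pi.add_apply,
      Pi.smul_apply, smul_eq_mul]
  have hζcZ : ∀ w, ζc ∈ Ztilde w ↔ ∀ i, (G w).mulVec ζc i ≤ g w i := by
    intro w; rw [hZtilde w]; rfl
  -- antitonicity
  have hQanti : ∀ σ' σ : ℝ, 0 ≤ σ' → σ' ≤ σ → Q σ ⊆ Q σ' := by
    intro σ' σ h0 hss w hw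
    rw [hQmem] at hw ⊢
    obtain ⟨h1, h2⟩ := hw
    refine ⟨h1, fun z hz => ?_⟩
    rw [hcond]
    intro i
    exact ps_interp h0 hss ((hζcZ w).mp h1 i) ((hcond σ w z).mp (h2 z hz) i)
  -- ζc-set and Q 0
  have hzcμ : ENNReal.ofReal (1 - ε) ≤ μ {w | ζc ∈ Ztilde w} := by
    rw [hZP] at hζc; exact hζc
  have hQ0 : {w | ζc ∈ Ztilde w} ⊆ Q 0 := by
    intro w hw
    rw [hQmem]
    exact ⟨hw, fun z hz => by simpa using hw⟩
  -- ZS inclusion criterion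
  have hZSsub : ∀ σ : ℝ, ENNReal.ofReal (1 - ε) ≤ μ (Q σ) → ZS σ ⊆ ZP := by
    intro σ hμQ ζ hζ
    rw [hZP]
    refine le_trans hμQ (measure_mono fun w hw => ?_)
    exact hw ζ (Set.mem_insert_of_mem _ hζ)
  -- scaling-factor facts
  have hsf0 : ∀ w, 0 ≤ sf w := by
    intro w
    rw [hsf w]
    split_ifs
    · exact Real.sSup_nonneg fun x hx => hx.1
    · exact le_refl 0
  have hsfle : ∀ σ : ℝ, 0 ≤ σ → ∀ w, w ∉ Q σ → sf w ≤ σ := by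
    intro σ hσ w hw
    rw [hsf w]
    split_ifs with hzc
    · rw [hQmem] at hw
      push_neg at hw
      obtain ⟨z, hzZ, hznot⟩ := hw hzc
      rw [hcond] at hznot
      push_neg at hznot
      obtain ⟨i, hi⟩ := hznot
      set a := (G w).mulVec ζc i
      set b := (G w).mulVec z i
      set c := g w i
      have hac : a ≤ c := (hζcZ w).mp hzc i
      have hb : 0 < b := by nlinarith
      refine Real.sSup_le (fun x hx => ?_) hσ
      obtain ⟨hx0, hxZ⟩ := hx
      have : ζc + x • z ∈ Ztilde w := hxZ (by rw [hZS]; exact Set.mem_image_of_mem _ hzZ)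
      have hxb : a + x * b ≤ c := (hcond x w z).mp this i
      nlinarith
    · exact hσ
  -- σstar facts
  have hσstar0 : ∀ ws, 0 ≤ σstar ws := by
    intro ws
    rw [hσstar ws]
    refine Real.sInf_nonneg fun t ht => ?_
    simp only [Set.mem_setOf_eq] at ht
    obtain ⟨i, hi⟩ := Finset.card_pos.mp (lt_of_lt_of_le hNr1 ht)
    exact le_trans (hsf0 (ws i)) (Finset.mem_filter.mp hi).2
  have hσstarle : ∀ ws t, Nr ≤ (Finset.univ.filter fun i : Fin N => sf (ws i) ≤ t).card →
      σstar ws ≤ t := by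
    intro ws t ht
    rw [hσstar ws]
    refine csInf_le ⟨0, fun x hx => ?_⟩ ht
    simp only [Set.mem_setOf_eq] at hx
    obtain ⟨i, hi⟩ := Finset.card_pos.mp (lt_of_lt_of_le hNr1 hx)
    exact le_trans (hsf0 (ws i)) (Finset.mem_filter.mp hi).2
  -- the set of good radii
  set Sset : Set ℝ := {σ | 0 ≤ σ ∧ ENNReal.ofReal (1 - ε) ≤ μ (Q σ)} with hSset
  have h0S : (0:ℝ) ∈ Sset := ⟨le_refl 0, le_trans hzcμ (measure_mono hQ0)⟩
  by_cases hbdd : BddAbove Sset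
  case neg =>
    have hall : ∀ σ : ℝ, 0 ≤ σ → ENNReal.ofReal (1 - ε) ≤ μ (Q σ) := by
      intro σ hσ
      obtain ⟨σ', hσ'S, hlt⟩ := not_bddAbove_iff.mp hbdd σ
      exact le_trans hσ'S.2 (measure_mono (hQanti σ σ' hσ hlt.le))
    have : {ws : Fin N → (Fin nw → ℝ) | ZS (σstar ws) ⊆ ZP} = Set.univ := by
      ext ws
      simp only [Set.mem_setOf_eq, Set.mem_univ, iff_true]
      exact hZSsub _ (hall _ (hσstar0 ws))
    rw [this]
    rw [measure_univ]
    exact ENNReal.ofReal_le_one.mpr (by linarith)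
  case pos =>
    set q := sSup Sset with hq
    have hq0 : 0 ≤ q := le_csSup hbdd h0S
    have hqlt : ∀ σ : ℝ, 0 ≤ σ → σ < q → ENNReal.ofReal (1 - ε) ≤ μ (Q σ) := by
      intro σ hσ hlt
      obtain ⟨σ', hσ'S, hlt'⟩ := exists_lt_of_lt_csSup ⟨0, h0S⟩ hlt
      exact le_trans hσ'S.2 (measure_mono (hQanti σ σ' hσ hlt'.le))
    have hqmem : ∀ σ : ℝ, 0 ≤ σ → σ ≤ q → ENNReal.ofReal (1 - ε) ≤ μ (Q σ) := by
      intro σ hσ hle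
      rcases lt_or_eq_of_le hle with h | h
      · exact hqlt σ hσ h
      · subst h
        rcases eq_or_lt_of_le hq0 with h0 | h0
        · exact le_trans h0S.2 (le_of_eq (by rw [← h0]))
        · -- continuity from above along σₙ = q - q/(n+1)
          set σn : ℕ → ℝ := fun n => q - q / (n + 1) with hσn
          have hc1 : ∀ n : ℕ, (0:ℝ) < (n:ℝ) + 1 := fun n => by positivity
          have hσn0 : ∀ n, 0 ≤ σn n := by
            intro n
            have : q / (n + 1) ≤ q := div_le_self hq0 (by linarith [hc1 n])
            simp only [hσn]; linarith
          have hσnlt : ∀ n, σn n < q := by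
            intro n
            have : 0 < q / ((n:ℝ) + 1) := div_pos h0 (hc1 n)
            simp only [hσn]; linarith
          have hmono : ∀ m n : ℕ, m ≤ n → σn m ≤ σn n := by
            intro m n hmn
            have : q / ((n:ℝ) + 1) ≤ q / ((m:ℝ) + 1) := by
              apply div_le_div_of_nonneg_left hq0 (hc1 m)
              push_cast; linarith [(Nat.cast_le (α := ℝ)).mpr hmn]
            simp only [hσn]; linarith
          have hQint : Q q = ⋂ n : ℕ, Q (σn n) := by
            apply Set.Subset.antisymm
            · exact Set.subset_iInter fun n => hQanti _ q (hσn0 n) (hσnlt n).le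
            · intro w hw
              rw [hQmem]
              have h0' := Set.mem_iInter.mp hw 0
              rw [hQmem] at h0'
              refine ⟨h0'.1, fun z hz => ?_⟩
              rw [hcond]
              intro i
              have hterm : ∀ n : ℕ,
                  (G w).mulVec ζc i + σn n * (G w).mulVec z i ≤ g w i := by
                intro n
                have hn := Set.mem_iInter.mp hw n
                rw [hQmem] at hn
                exact (hcond _ w z).mp (hn.2 z hz) i
              have h1 : Filter.Tendsto (fun n : ℕ => q / ((n:ℝ) + 1))
                  Filter.atTop (nhds 0) := by
                have := tendsto_one_div_add_atTop_nhds_zero_nat (𝕜 := ℝ)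
                have h2 := this.const_mul q
                simpa [div_eq_mul_inv, mul_comm] using h2
              have hlim : Filter.Tendsto
                  (fun n : ℕ => (G w).mulVec ζc i + σn n * (G w).mulVec z i)
                  Filter.atTop
                  (nhds ((G w).mulVec ζc i + q * (G w).mulVec z i)) := by
                have h2 : Filter.Tendsto σn Filter.atTop (nhds q) := by
                  have := (tendsto_const_nhds (x := q) (f := Filter.atTop)).sub h1
                  simpa [hσn] using this
                exact Filter.Tendsto.const_add _ (h2.mul_const _)
              exact le_of_tendsto hlim (Filter.Eventually.of_forall hterm)
          have hμeq : μ (⋂ n, Q (σn n)) = ⨅ n, μ (Q (σn n)) := by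
            refine Directed.measure_iInter (fun n => (hQmeas _).nullMeasurableSet)
              ?_ ⟨0, measure_ne_top μ _⟩
            have hA : Antitone fun n => Q (σn n) := by
              intro m n hmn
              exact hQanti _ _ (hσn0 m) (hmono m n hmn)
            exact hA.directed_ge
          rw [hQint, hμeq]
          exact le_iInf fun n => hqlt _ (hσn0 n) (hσnlt n)
    -- now the sampling events
    set A : ℕ → Set (Fin nw → ℝ) := fun n => (Q (q + 1 / (n + 1)))ᶜ with hA
    have hAmeas : ∀ n, MeasurableSet (A n) := fun n => (hQmeas _).compl
    have hqn0 : ∀ n : ℕ, (0:ℝ) ≤ q + 1 / ((n:ℝ) + 1) := by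
      intro n
      have : (0:ℝ) < 1 / ((n:ℝ) + 1) := by positivity
      linarith
    have hμA : ∀ n, ENNReal.ofReal ε ≤ μ (A n) := by
      intro n
      have hnot : q + 1 / ((n:ℝ) + 1) ∉ Sset := by
        intro hmem
        have h1 := le_csSup hbdd hmem
        have : (0:ℝ) < 1 / ((n:ℝ) + 1) := by positivity
        rw [← hq] at h1
        linarith
      have hQle : μ (Q (q + 1 / ((n:ℝ) + 1))) ≤ ENNReal.ofReal (1 - ε) := by
        refine le_of_lt (not_le.mp fun hc => hnot ⟨hqn0 n, hc⟩)
      have hsum : ENNReal.ofReal ε + ENNReal.ofReal (1 - ε) = 1 := by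
        rw [← ENNReal.ofReal_add hε0.le (by linarith)]
        norm_num
      calc ENNReal.ofReal ε = 1 - ENNReal.ofReal (1 - ε) := by
            rw [← hsum, ENNReal.add_sub_cancel_right ENNReal.ofReal_ne_top]
        _ ≤ 1 - μ (Q (q + 1 / ((n:ℝ) + 1))) := tsub_le_tsub_left hQle 1
        _ = μ (A n) := (prob_compl_eq_one_sub (hQmeas _)).symm
    set E : ℕ → Set (Fin N → (Fin nw → ℝ)) :=
      fun n => {ws | Nr ≤ (Finset.univ.filter fun i => ws i ∈ A n).card} with hE
    have hEmeas : ∀ n, MeasurableSet (E n) := by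
      intro n
      have h := ps_meas_count N Nr (A n) (hAmeas n)
      simpa [hE] using h
    have hEσ : ∀ n ws, ws ∈ E n → σstar ws ≤ q + 1 / ((n:ℝ) + 1) := by
      intro n ws hws
      refine hσstarle ws _ (le_trans hws (Finset.card_le_card ?_))
      intro i hi
      rw [Finset.mem_filter] at hi ⊢
      exact ⟨hi.1, hsfle _ (hqn0 n) _ hi.2⟩
    have hEanti : Antitone E := by
      intro m n hmn ws hws
      simp only [hE, Set.mem_setOf_eq] at hws ⊢
      refine le_trans hws (Finset.card_le_card ?_)
      intro i hi
      rw [Finset.mem_filter] at hi ⊢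
      refine ⟨hi.1, ?_⟩
      have hσσ : q + 1 / ((n:ℝ) + 1) ≤ q + 1 / ((m:ℝ) + 1) := by
        have h1 : (0:ℝ) < (m:ℝ) + 1 := by positivity
        have h2 : ((m:ℝ) + 1) ≤ ((n:ℝ) + 1) := by
          have := (Nat.cast_le (α := ℝ)).mpr hmn
          linarith
        have h3 : 1 / ((n:ℝ) + 1) ≤ 1 / ((m:ℝ) + 1) :=
          one_div_le_one_div_of_le h1 h2
        linarith
      have hsub : Q (q + 1 / ((m:ℝ) + 1)) ⊆ Q (q + 1 / ((n:ℝ) + 1)) :=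
        hQanti _ _ (hqn0 n) hσσ
      simp only [hA, Set.mem_compl_iff] at hi ⊢
      exact fun hc => hi.2 (hsub hc)
    have hEcomp : ∀ n, μN (E n)ᶜ ≤ ENNReal.ofReal εc := by
      intro n
      have hEc : (E n)ᶜ = {ws : Fin N → (Fin nw → ℝ) |
          (Finset.univ.filter fun i => ws i ∈ A n).card < Nr} := by
        ext ws
        simp [hE, not_le]
      rw [hEc, hμN]
      exact ps_count_bound μ N Nr hNr1 (A n) (hAmeas n) ε εc hε0 hε1 hεc0 hεc1 hmR hN (hμA n)
    have hInt : (⋂ n, E n) ⊆ {ws : Fin N → (Fin nw → ℝ) | ZS (σstar ws) ⊆ ZP} := by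
      intro ws hws
      have hle : σstar ws ≤ q := by
        by_contra hc
        push_neg at hc
        obtain ⟨n, hn⟩ := exists_nat_one_div_lt (sub_pos.mpr hc)
        have := hEσ n ws (Set.mem_iInter.mp hws n)
        push_cast at hn this
        linarith
      exact hZSsub _ (hqmem _ (hσstar0 ws) hle)
    have hTmeas : MeasurableSet (⋂ n, E n) := MeasurableSet.iInter hEmeas
    have hUnion : μN (⋂ n, E n)ᶜ ≤ ENNReal.ofReal εc := by
      rw [Set.compl_iInter]
      have hdir : Directed (· ⊆ ·) fun n => (E n)ᶜ := by
        have hm : Monotone fun n => (E n)ᶜ :=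
          fun m n h => Set.compl_subset_compl.mpr (hEanti h)
        exact hm.directed_le
      rw [Directed.measure_iUnion hdir]
      exact iSup_le hEcomp
    have hsumc : ENNReal.ofReal (1 - εc) + ENNReal.ofReal εc = 1 := by
      rw [← ENNReal.ofReal_add (by linarith) hεc0.le]
      norm_num
    calc ENNReal.ofReal (1 - εc) = 1 - ENNReal.ofReal εc := by
          rw [← hsumc, ENNReal.add_sub_cancel_right ENNReal.ofReal_ne_top]
      _ ≤ 1 - μN (⋂ n, E n)ᶜ := tsub_le_tsub_left hUnion 1
      _ = μN (⋂ n, E n) := by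
          rw [prob_compl_eq_one_sub hTmeas]
          exact ENNReal.sub_sub_cancel ENNReal.one_ne_top prob_le_one
      _ ≤ μN {ws : Fin N → (Fin nw → ℝ) | ZS (σstar ws) ⊆ ZP} := measure_mono hInt
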